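/- Let G = (V, E) be the graph with vertices V = {(1),(2),(3)} ∪ {(j,k) : j ≠ k ∈ {1,2,3}} and edges {(j),(k,j)} for all j ≠ k and {(j,k),(k,j)} for j < k, and let E′ be the set of pairs of distinct vertices not adjacent in G. Suppose y ∈ (O_K ∖ {0})^V (write y_j = y_{(j)}, y_{j,k} = y_{(j,k)}) satisfies gcd(y_u, y_v) = 1 for all {u,v} ∈ E′. Define x₀ = y₁y₂y₃ y_{1,2}y_{2,1}y_{1,3}y_{3,1}y_{2,3}y_{3,2} and x_j = y_j³ y_{j,k} y_{j,l} y_{k,j}² y_{l,j}² for {j,k,l} = {1,2,3}. Then x₀³ = x₁x₂x₃, gcd(x₀, x₁, x₂, x₃) = 1 in O_K, and ‖x₀‖_∞ ≤ max{‖x₁‖_∞, ‖x₂‖_∞, ‖x₃‖_∞}. -/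

import Mathlib

open NumberField

/-- The six ordered pairs `(j,k)` with `j ≠ k ∈ {1,2,3}`. -/
abbrev Pair : Type := {p : Fin 3 × Fin 3 // p.1 ≠ p.2}

/-- The nine vertices `V = {(1),(2),(3)} ∪ {(j,k) : j ≠ k}` of the graph `G`. -/
abbrev Vtx : Type := Fin 3 ⊕ Pair

/-- `rel u v` holds for the edges `{(j),(k,j)}` (for all `j ≠ k`) and `{(j,k),(k,j)}`. -/
def rel : Vtx → Vtx → Bool
  | Sum.inl j, Sum.inr p => p.1.2 == j
  | Sum.inr p, Sum.inr q => q.1.1 == p.1.2 && q.1.2 == p.1.1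
  | _, _ => false

/-- Adjacency in the graph `G = (V,E)` with the nine edges `{(j),(k,j)}` (`j ≠ k`) and
`{(j,k),(k,j)}` (`j < k`). -/
def adj (u v : Vtx) : Bool := rel u v || rel v u

/-- The coordinate `x_j = y_j³ y_{j,k} y_{j,l} y_{k,j}² y_{l,j}²` for `{j,k,l} = {1,2,3}`. -/
def coordX {R : Type*} [CommRing R] (y : Vtx → R) (j k l : Fin 3)
    (hjk : j ≠ k) (hjl : j ≠ l) : R :=
  y (Sum.inl j) ^ 3 * y (Sum.inr ⟨(j, k), hjk⟩) * y (Sum.inr ⟨(j, l), hjl⟩) *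
    y (Sum.inr ⟨(k, j), hjk.symm⟩) ^ 2 * y (Sum.inr ⟨(l, j), hjl.symm⟩) ^ 2

lemma prod_vtx {R : Type*} [CommRing R] (f : Vtx → R) :
    ∏ v, f v = f (Sum.inl 0) * f (Sum.inl 1) * f (Sum.inl 2) *
      f (Sum.inr ⟨(0,1), by decide⟩) * f (Sum.inr ⟨(0,2), by decide⟩) *
      f (Sum.inr ⟨(1,0), by decide⟩) * f (Sum.inr ⟨(1,2), by decide⟩) *
      f (Sum.inr ⟨(2,0), by decide⟩) * f (Sum.inr ⟨(2,1), by decide⟩) := by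
  rw [Fintype.prod_sum_type, Fin.prod_univ_three]
  have h : (Finset.univ : Finset Pair) =
      {⟨(0,1), by decide⟩, ⟨(0,2), by decide⟩, ⟨(1,0), by decide⟩,
       ⟨(1,2), by decide⟩, ⟨(2,0), by decide⟩, ⟨(2,1), by decide⟩} := by decide
  rw [h, Finset.prod_insert (by decide), Finset.prod_insert (by decide),
    Finset.prod_insert (by decide), Finset.prod_insert (by decide),
    Finset.prod_insert (by decide), Finset.prod_singleton]
  ring

lemma key_coprime {R : Type*} [CommSemiring R] {P : Ideal R} (hP : P ≠ ⊤) {a b : R}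
    (ha : a ∈ P) (hb : b ∈ P) (h : IsCoprime a b) : False := by
  obtain ⟨u, v, huv⟩ := h
  exact hP (P.eq_top_iff_one.mpr (huv ▸ P.add_mem (P.mul_mem_left u ha) (P.mul_mem_left v hb)))

lemma coordX_mem {R : Type*} [CommRing R] {P : Ideal R} (hP : P.IsPrime)
    (y : Vtx → R) (j k l : Fin 3) (hjk : j ≠ k) (hjl : j ≠ l)
    (h : coordX y j k l hjk hjl ∈ P) :
    y (Sum.inl j) ∈ P ∨ y (Sum.inr ⟨(j,k), hjk⟩) ∈ P ∨ y (Sum.inr ⟨(j,l), hjl⟩) ∈ P ∨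
      y (Sum.inr ⟨(k,j), hjk.symm⟩) ∈ P ∨ y (Sum.inr ⟨(l,j), hjl.symm⟩) ∈ P := by
  unfold coordX at h
  rcases hP.mem_or_mem h with h | h
  · rcases hP.mem_or_mem h with h | h
    · rcases hP.mem_or_mem h with h | h
      · rcases hP.mem_or_mem h with h | h
        · exact Or.inl (hP.mem_of_pow_mem _ h)
        · exact Or.inr (Or.inl h)
      · exact Or.inr (Or.inr (Or.inl h))
    · exact Or.inr (Or.inr (Or.inr (Or.inl (hP.mem_of_pow_mem _ h))))
  · exact Or.inr (Or.inr (Or.inr (Or.inr (hP.mem_of_pow_mem _ h))))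

/-- if `y ∈ (𝓞_K ∖ {0})^V` satisfies `gcd(y_u, y_v) = 1` for all pairs
`{u,v}` of distinct vertices not adjacent in `G`, then
`x₀ = y₁y₂y₃y_{1,2}y_{2,1}y_{1,3}y_{3,1}y_{2,3}y_{3,2}` and
`x_j = y_j³y_{j,k}y_{j,l}y_{k,j}²y_{l,j}²` satisfy `x₀³ = x₁x₂x₃`,
`gcd(x₀,x₁,x₂,x₃) = 1` and `‖x₀‖_∞ ≤ max{‖x₁‖_∞, ‖x₂‖_∞, ‖x₃‖_∞}`. -/
theorem stmt19 (K : Type) [Field K] [NumberField K]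
    (hdeg : Module.finrank ℚ K = 2)
    (ι : K →+* ℂ) (himag : ∃ x : K, (ι x).im ≠ 0)
    (hcl : NumberField.classNumber K = 1)
    (nrm : 𝓞 K → ℝ) (hnrm : ∀ x : 𝓞 K, nrm x = ‖ι (x : K)‖ ^ 2)
    (y : Vtx → 𝓞 K) (hy : ∀ v, y v ≠ 0)
    (hcop : ∀ u v : Vtx, u ≠ v → adj u v = false → IsCoprime (y u) (y v))
    (x : Fin 4 → 𝓞 K)
    (hx0 : x 0 = ∏ v : Vtx, y v)
    (hx1 : x 1 = coordX y 0 1 2 (by decide) (by decide))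
    (hx2 : x 2 = coordX y 1 2 0 (by decide) (by decide))
    (hx3 : x 3 = coordX y 2 0 1 (by decide) (by decide)) :
    x 0 ^ 3 = x 1 * x 2 * x 3 ∧
    Ideal.span {x 0, x 1, x 2, x 3} = (⊤ : Ideal (𝓞 K)) ∧
    nrm (x 0) ≤ max (nrm (x 1)) (max (nrm (x 2)) (nrm (x 3))) := by
  have hcube : x 0 ^ 3 = x 1 * x 2 * x 3 := by
    rw [hx0, hx1, hx2, hx3, prod_vtx]
    unfold coordX
    ring
  refine ⟨hcube, ?_, ?_⟩
  · by_contra hne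
    obtain ⟨P, hPmax, hle⟩ := Ideal.exists_le_maximal _ hne
    have hP : P.IsPrime := hPmax.isPrime
    have hPne : P ≠ ⊤ := hPmax.ne_top
    have m1 : x 1 ∈ P := hle (Ideal.subset_span (by simp))
    have m2 : x 2 ∈ P := hle (Ideal.subset_span (by simp))
    have m3 : x 3 ∈ P := hle (Ideal.subset_span (by simp))
    rw [hx1] at m1; rw [hx2] at m2; rw [hx3] at m3
    have d1 := coordX_mem hP y 0 1 2 (by decide) (by decide) m1
    have d2 := coordX_mem hP y 1 2 0 (by decide) (by decide) m2
    have d3 := coordX_mem hP y 2 0 1 (by decide) (by decide) m3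
    rcases d1 with h1 | h1 | h1 | h1 | h1 <;>
      rcases d2 with h2 | h2 | h2 | h2 | h2 <;>
        rcases d3 with h3 | h3 | h3 | h3 | h3 <;>
          first
            | exact key_coprime hPne h1 h2 (hcop _ _ (by decide) (by decide))
            | exact key_coprime hPne h1 h3 (hcop _ _ (by decide) (by decide))
            | exact key_coprime hPne h2 h3 (hcop _ _ (by decide) (by decide))
  · have hι : (ι (x 0 : K)) ^ 3 = ι (x 1 : K) * ι (x 2 : K) * ι (x 3 : K) := by
      rw [← map_pow, ← map_mul, ← map_mul]
      congr 1
      exact_mod_cast congrArg (fun z : 𝓞 K => (z : K)) hcube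
    have habs : ‖ι (x 0 : K)‖ ^ 3 =
        ‖ι (x 1 : K)‖ * ‖ι (x 2 : K)‖ * ‖ι (x 3 : K)‖ := by
      rw [← norm_pow, hι, norm_mul, norm_mul]
    set a0 := ‖ι (x 0 : K)‖ with ha0
    set a1 := ‖ι (x 1 : K)‖ with ha1
    set a2 := ‖ι (x 2 : K)‖ with ha2
    set a3 := ‖ι (x 3 : K)‖ with ha3
    rw [hnrm, hnrm, hnrm, hnrm]
    set M : ℝ := max (a1 ^ 2) (max (a2 ^ 2) (a3 ^ 2)) with hM
    have hMnn : 0 ≤ M := le_trans (sq_nonneg a1) (le_max_left _ _)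
    have h0 : (a0 ^ 2) ^ 3 = a1 ^ 2 * a2 ^ 2 * a3 ^ 2 := by
      have : (a0 ^ 2) ^ 3 = (a0 ^ 3) ^ 2 := by ring
      rw [this, habs]; ring
    have hle3 : (a0 ^ 2) ^ 3 ≤ M ^ 3 := by
      rw [h0]
      have n1 : a1 ^ 2 ≤ M := le_max_left _ _
      have n2 : a2 ^ 2 ≤ M := le_trans (le_max_left _ _) (le_max_right _ _)
      have n3 : a3 ^ 2 ≤ M := le_trans (le_max_right _ _) (le_max_right _ _)
      have p2 := sq_nonneg a2
      have p3 := sq_nonneg a3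
      calc a1 ^ 2 * a2 ^ 2 * a3 ^ 2 ≤ M * M * M :=
            mul_le_mul (mul_le_mul n1 n2 p2 hMnn) n3 p3 (mul_nonneg hMnn hMnn)
        _ = M ^ 3 := by ring
    exact le_of_pow_le_pow_left₀ (n := 3) (by norm_num) hMnn hle3
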